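/- (Total mass of E^{(k)}.) For all integers k ≥ 0, f ≥ 1 and N ≥ 0: Σ_{x=0}^{f·p^N − 1} E^{(k)}_{u:a_1,q}(x ; f·p^N) = (1−u)^{−1} · H_k^{(1)}(u,q|a_1), where H_k^{(1)}(u,q|a_1) := (1−u)(1−q)^{−k} Σ_{l=0}^k binom(k,l)(−1)^l (1−q^{l·a_1}u)^{−1}. In particular, ∫_X dE^{(k)}_{u:a_1,q} = ∫_{ℤ_p} dE^{(k)}_{u:a_1,q} = (1−u)^{−1} H_k^{(1)}(u,q|a_1). -/

import Mathlib

open Filter Finset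

/-- For `q` in a normed field and a `p`-adic integer `z`, the power `q^z`, defined as the
limit of `q^(z mod p^N)` (for convergent `q` this agrees with `exp_p (z · log_p q)`). -/
noncomputable def qpow {p : ℕ} [Fact p.Prime] {K : Type*} [NormedField K] (q : K) (z : ℤ_[p]) :
    K :=
  limUnder atTop fun N : ℕ => q ^ (z.appr N)

/-- The `q`-number `[z : q] = (1 - q^z)/(1 - q)` for a `p`-adic integer `z`. -/
noncomputable def qnum {p : ℕ} [Fact p.Prime] {K : Type*} [NormedField K] (q : K) (z : ℤ_[p]) :
    K :=
  (1 - qpow q z) / (1 - q)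

/-- The `q`-analogue of the Euler–Barnes polynomial
`H_n^{(r)}(w, u, q | a_1, …, a_r)
  = (1-u)^r (1-q)^{-n} ∑_{l=0}^n C(n,l) (-1)^l q^{lw} ∏_j (1 - q^{l a_j} u)⁻¹`. -/
noncomputable def qEulerBarnes {p : ℕ} [Fact p.Prime] {K : Type*} [NormedField K]
    (r n : ℕ) (w : ℤ_[p]) (u q : K) (a : Fin r → ℤ_[p]) : K :=
  (1 - u) ^ r * ((1 - q)⁻¹) ^ n *
    ∑ l ∈ Finset.range (n + 1),
      (n.choose l : K) * (-1) ^ l * qpow q ((l : ℤ_[p]) * w) *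
        ∏ j, (1 - qpow q ((l : ℤ_[p]) * a j) * u)⁻¹

/-- The paper's distribution `E^{(k)}_{u:a_1,q}(x + M ℤ_p)` from formula (3):
`E^{(k)}(x; M) = u^x (1-q)^{-k} ∑_{l=0}^k C(k,l)(-1)^l q^{l a_1 x} (1 - q^{l a_1 M} u^M)⁻¹`. -/
noncomputable def Emeas {p : ℕ} [Fact p.Prime] {K : Type*} [NormedField K]
    (u q : K) (a1 : ℤ_[p]) (k M x : ℕ) : K :=
  u ^ x * ((1 - q)⁻¹) ^ k *
    ∑ l ∈ Finset.range (k + 1),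
      (k.choose l : K) * (-1) ^ l * qpow q (((l * x : ℕ) : ℤ_[p]) * a1) *
        (1 - qpow q (((l * M : ℕ) : ℤ_[p]) * a1) * u ^ M)⁻¹

section Aux

variable {p : ℕ} [Fact p.Prime] {K : Type*} [NormedField K] [IsUltrametricDist K]

/-- In an ultrametric field, the larger norm wins. -/
lemma aux_norm_add_eq {a b : K} (h : ‖b‖ < ‖a‖) : ‖a + b‖ = ‖a‖ := by
  refine le_antisymm ((IsUltrametricDist.norm_add_le_max a b).trans (max_le le_rfl h.le)) ?_
  by_contra hlt
  push_neg at hlt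
  have h2 : ‖a‖ ≤ max ‖a + b‖ ‖b‖ := by
    simpa using IsUltrametricDist.norm_add_le_max (a + b) (-b)
  exact absurd h2 (not_le.mpr (max_lt hlt h))

lemma aux_norm_sub_le_one {Q : K} (hQ : ‖Q‖ ≤ 1) : ‖Q - 1‖ ≤ 1 := by
  rw [sub_eq_add_neg]
  refine (IsUltrametricDist.norm_add_le_max Q (-1)).trans ?_
  simp [hQ]

lemma aux_norm_le_one {q : K} (hq : ‖q - 1‖ < 1) : ‖q‖ ≤ 1 := by
  have : q = 1 + (q - 1) := by ring
  rw [this, aux_norm_add_eq (by simpa using hq)]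
  simp

/-- `‖q^m - 1‖ ≤ ‖q - 1‖` when `‖q‖ ≤ 1`. -/
lemma aux_geom_norm {q : K} (hq : ‖q‖ ≤ 1) (m : ℕ) : ‖q ^ m - 1‖ ≤ ‖q - 1‖ := by
  rw [← geom_sum_mul q m, norm_mul]
  have h : ‖∑ i ∈ range m, q ^ i‖ ≤ 1 := by
    apply IsUltrametricDist.norm_sum_le_of_forall_le_of_nonneg zero_le_one
    intro i _
    simpa [norm_pow] using pow_le_one₀ (norm_nonneg q) hq
  calc ‖∑ i ∈ range m, q ^ i‖ * ‖q - 1‖ ≤ 1 * ‖q - 1‖ := by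
        exact mul_le_mul_of_nonneg_right h (norm_nonneg _)
    _ = ‖q - 1‖ := one_mul _

/-- One step of the decay: `‖Q^p - 1‖ ≤ max ‖p‖ ‖Q-1‖ * ‖Q-1‖`. -/
lemma aux_step {Q : K} (hQ : ‖Q‖ ≤ 1) :
    ‖Q ^ p - 1‖ ≤ max ‖(p : K)‖ ‖Q - 1‖ * ‖Q - 1‖ := by
  have hp : p.Prime := Fact.out
  have hx1 : ‖Q - 1‖ ≤ 1 := aux_norm_sub_le_one hQ
  have hkey : Q ^ p - 1 = ∑ i ∈ range p, (Q - 1) ^ (i + 1) * (p.choose (i + 1) : K) := by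
    have h := add_pow (Q - 1) 1 p
    simp only [one_pow, mul_one, sub_add_cancel] at h
    rw [h, Finset.sum_range_succ']
    simp
  rw [hkey]
  apply IsUltrametricDist.norm_sum_le_of_forall_le_of_nonneg
    (mul_nonneg (le_max_of_le_right (norm_nonneg _)) (norm_nonneg _))
  intro i hi
  rw [Finset.mem_range] at hi
  rw [norm_mul, norm_pow]
  rcases eq_or_lt_of_le (Nat.succ_le_of_lt hi) with he | hlt
  · -- i + 1 = p : choose = 1, bound ‖x‖^p ≤ ‖x‖ * ‖x‖
    rw [show i + 1 = p from he, Nat.choose_self]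
    simp only [Nat.cast_one, norm_one, mul_one]
    calc ‖Q - 1‖ ^ p ≤ ‖Q - 1‖ ^ 2 :=
          pow_le_pow_of_le_one (norm_nonneg _) hx1 hp.two_le
      _ = ‖Q - 1‖ * ‖Q - 1‖ := sq ‖Q - 1‖
      _ ≤ max ‖(p : K)‖ ‖Q - 1‖ * ‖Q - 1‖ :=
          mul_le_mul_of_nonneg_right (le_max_right _ _) (norm_nonneg _)
  · -- 0 < i + 1 < p : p ∣ choose
    obtain ⟨m, hm⟩ := hp.dvd_choose_self (Nat.succ_ne_zero i) hlt
    have hc : ‖(p.choose (i + 1) : K)‖ ≤ ‖(p : K)‖ := by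
      rw [hm, Nat.cast_mul, norm_mul]
      calc ‖(p : K)‖ * ‖(m : K)‖ ≤ ‖(p : K)‖ * 1 :=
            mul_le_mul_of_nonneg_left (IsUltrametricDist.norm_natCast_le_one K m)
              (norm_nonneg _)
        _ = ‖(p : K)‖ := mul_one _
    calc ‖Q - 1‖ ^ (i + 1) * ‖(p.choose (i + 1) : K)‖
        ≤ ‖Q - 1‖ ^ 1 * ‖(p : K)‖ := by
          apply mul_le_mul (pow_le_pow_of_le_one (norm_nonneg _) hx1 (Nat.le_add_left 1 i))
            hc (norm_nonneg _) (pow_nonneg (norm_nonneg _) 1)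
      _ = ‖(p : K)‖ * ‖Q - 1‖ := by ring
      _ ≤ max ‖(p : K)‖ ‖Q - 1‖ * ‖Q - 1‖ :=
          mul_le_mul_of_nonneg_right (le_max_left _ _) (norm_nonneg _)

/-- Decay of `‖q^{p^n} - 1‖`. -/
lemma aux_decay {q : K} (hq : ‖q - 1‖ < 1) (n : ℕ) :
    ‖q ^ p ^ n - 1‖ ≤ (max ‖(p : K)‖ ‖q - 1‖) ^ n * ‖q - 1‖ := by
  induction n with
  | zero => simp
  | succ n ih =>
    have hqle : ‖q‖ ≤ 1 := aux_norm_le_one hq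
    have hQ : ‖q ^ p ^ n‖ ≤ 1 := by
      rw [norm_pow]; exact pow_le_one₀ (norm_nonneg _) hqle
    have hcle : max ‖(p : K)‖ ‖q - 1‖ ≤ 1 :=
      max_le (IsUltrametricDist.norm_natCast_le_one K p) hq.le
    have hc0 : 0 ≤ max ‖(p : K)‖ ‖q - 1‖ := le_max_of_le_right (norm_nonneg _)
    have hQ1 : ‖q ^ p ^ n - 1‖ ≤ ‖q - 1‖ := by
      refine ih.trans ?_
      calc (max ‖(p : K)‖ ‖q - 1‖) ^ n * ‖q - 1‖ ≤ 1 * ‖q - 1‖ :=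
            mul_le_mul_of_nonneg_right (pow_le_one₀ hc0 hcle) (norm_nonneg _)
        _ = ‖q - 1‖ := one_mul _
    have h1 : q ^ p ^ (n + 1) = (q ^ p ^ n) ^ p := by
      rw [← pow_mul, pow_succ]
    rw [h1]
    calc ‖(q ^ p ^ n) ^ p - 1‖
        ≤ max ‖(p : K)‖ ‖q ^ p ^ n - 1‖ * ‖q ^ p ^ n - 1‖ := aux_step hQ
      _ ≤ max ‖(p : K)‖ ‖q - 1‖ * ((max ‖(p : K)‖ ‖q - 1‖) ^ n * ‖q - 1‖) :=
          mul_le_mul (max_le_max le_rfl hQ1) ih (norm_nonneg _) hc0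
      _ = (max ‖(p : K)‖ ‖q - 1‖) ^ (n + 1) * ‖q - 1‖ := by ring

/-- If `p^n` divides `a - b` (as integers), then `‖q^a - q^b‖` is small. -/
lemma aux_pow_sub {q : K} (hq : ‖q - 1‖ < 1) {n a b : ℕ}
    (h : ((p : ℤ)) ^ n ∣ (a : ℤ) - b) :
    ‖q ^ a - q ^ b‖ ≤ (max ‖(p : K)‖ ‖q - 1‖) ^ n * ‖q - 1‖ := by
  have hqle : ‖q‖ ≤ 1 := aux_norm_le_one hq
  -- WLOG b ≤ a
  wlog hab : b ≤ a generalizing a b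
  · rw [norm_sub_rev]
    refine this ?_ (by omega)
    rw [← neg_sub]; exact dvd_neg.mpr h
  have h' : p ^ n ∣ a - b := by
    have h2 : ((p : ℤ)) ^ n ∣ ((a - b : ℕ) : ℤ) := by
      rw [Nat.cast_sub hab]; exact h
    exact_mod_cast h2
  obtain ⟨j, hj⟩ := h'
  have ha : a = b + p ^ n * j := by omega
  rw [ha, pow_add, ← mul_one (q ^ b), mul_assoc, ← mul_sub, norm_mul, one_mul]
  have h1 : ‖q ^ b‖ ≤ 1 := by rw [norm_pow]; exact pow_le_one₀ (norm_nonneg _) hqle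
  have h2 : ‖q ^ (p ^ n * j) - 1‖ ≤ (max ‖(p : K)‖ ‖q - 1‖) ^ n * ‖q - 1‖ := by
    rw [pow_mul]
    calc ‖(q ^ p ^ n) ^ j - 1‖ ≤ ‖q ^ p ^ n - 1‖ :=
          aux_geom_norm (by rw [norm_pow]; exact pow_le_one₀ (norm_nonneg _) hqle) j
      _ ≤ _ := aux_decay hq n
  calc ‖q ^ b‖ * ‖q ^ (p ^ n * j) - 1‖ ≤ 1 * ((max ‖(p : K)‖ ‖q - 1‖) ^ n * ‖q - 1‖) :=
        mul_le_mul h1 h2 (norm_nonneg _) zero_le_one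
    _ = _ := one_mul _

/-- `p`-adic divisibility of approximations, in `ℤ`. -/
lemma aux_appr_dvd {z : ℤ_[p]} {n : ℕ} {a b : ℕ}
    (ha : ((p : ℤ_[p])) ^ n ∣ z - a) (hb : ((p : ℤ_[p])) ^ n ∣ z - b) :
    ((p : ℤ)) ^ n ∣ (a : ℤ) - b := by
  have h : ((p : ℤ_[p])) ^ n ∣ (((a : ℤ) - b : ℤ) : ℤ_[p]) := by
    push_cast
    have : ((a : ℤ_[p]) - b) = (z - b) - (z - a) := by ring
    rw [this]
    exact dvd_sub hb ha
  have h2 : ‖(((a : ℤ) - b : ℤ) : ℤ_[p])‖ ≤ (p : ℝ) ^ (-n : ℤ) := by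
    rw [PadicInt.norm_le_pow_iff_mem_span_pow]
    exact Ideal.mem_span_singleton.mpr h
  exact_mod_cast PadicInt.norm_int_le_pow_iff_dvd.mp h2

variable [CompleteSpace K]

/-- The defining sequence of `qpow` converges to it. -/
lemma aux_tendsto {q : K} (hq : ‖q - 1‖ < 1) (hp : ‖(p : K)‖ < 1) (z : ℤ_[p]) :
    Tendsto (fun N : ℕ => q ^ z.appr N) atTop (nhds (qpow q z)) := by
  set c := max ‖(p : K)‖ ‖q - 1‖ with hc
  have hc1 : c < 1 := max_lt hp hq
  have hC : CauchySeq fun N : ℕ => q ^ z.appr N := by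
    apply cauchySeq_of_le_geometric c ‖q - 1‖ hc1
    intro n
    rw [dist_eq_norm]
    have h1 := PadicInt.appr_spec n z
    have h2 := PadicInt.appr_spec (n + 1) z
    rw [Ideal.mem_span_singleton] at h1 h2
    have h2' : ((p : ℤ_[p])) ^ n ∣ z - z.appr (n + 1) := dvd_trans (pow_dvd_pow _ (by omega)) h2
    have hdvd := aux_appr_dvd (p := p) h1 h2'
    calc ‖q ^ z.appr n - q ^ z.appr (n + 1)‖ ≤ c ^ n * ‖q - 1‖ := aux_pow_sub hq hdvd
      _ = ‖q - 1‖ * c ^ n := mul_comm _ _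
  obtain ⟨L, hL⟩ := cauchySeq_tendsto_of_complete hC
  rw [qpow, hL.limUnder_eq]
  exact hL

/-- `qpow q (n * z) = (qpow q z) ^ n` for a natural number `n`. -/
lemma aux_qpow_natCast_mul {q : K} (hq : ‖q - 1‖ < 1) (hp : ‖(p : K)‖ < 1) (n : ℕ)
    (z : ℤ_[p]) : qpow q ((n : ℤ_[p]) * z) = qpow q z ^ n := by
  set c := max ‖(p : K)‖ ‖q - 1‖ with hc
  have hc1 : c < 1 := max_lt hp hq
  have hc0 : 0 ≤ c := le_max_of_le_right (norm_nonneg _)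
  have h1 := aux_tendsto hq hp z
  have h2 := aux_tendsto hq hp ((n : ℤ_[p]) * z)
  have h3 : Tendsto (fun N : ℕ => (q ^ z.appr N) ^ n) atTop (nhds (qpow q z ^ n)) :=
    h1.pow n
  have key : Tendsto
      (fun N : ℕ => q ^ ((n : ℤ_[p]) * z).appr N - (q ^ z.appr N) ^ n) atTop (nhds 0) := by
    refine squeeze_zero_norm (a := fun N : ℕ => c ^ N * ‖q - 1‖) (fun N => ?_) ?_
    · 
      rw [← pow_mul]
      apply aux_pow_sub hq
      have ha := PadicInt.appr_spec N ((n : ℤ_[p]) * z)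
      have hb := PadicInt.appr_spec N z
      rw [Ideal.mem_span_singleton] at ha hb
      have hb' : ((p : ℤ_[p])) ^ N ∣ (n : ℤ_[p]) * z - (z.appr N * n : ℕ) :=
        by push_cast; rw [show (n : ℤ_[p]) * z - z.appr N * n = n * (z - z.appr N) by ring]
           exact Dvd.dvd.mul_left hb _
      exact aux_appr_dvd (p := p) ha hb'
    · simpa using (tendsto_pow_atTop_nhds_zero_of_lt_one hc0 hc1).mul_const ‖q - 1‖
  have h4 : Tendsto (fun N : ℕ => q ^ ((n : ℤ_[p]) * z).appr N) atTop
      (nhds (0 + qpow q z ^ n)) := by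
    have := key.add h3
    simpa using this
  rw [zero_add] at h4
  exact tendsto_nhds_unique h2 h4

/-- `‖qpow q z - 1‖ ≤ ‖q - 1‖`. -/
lemma aux_qpow_sub_one {q : K} (hq : ‖q - 1‖ < 1) (hp : ‖(p : K)‖ < 1) (z : ℤ_[p]) :
    ‖qpow q z - 1‖ ≤ ‖q - 1‖ := by
  have h := ((aux_tendsto hq hp z).sub tendsto_const_nhds (g := fun _ => (1 : K))).norm
  apply le_of_tendsto h
  filter_upwards with N
  exact aux_geom_norm (aux_norm_le_one hq) _

/-- Nonvanishing of the denominators. -/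
lemma aux_ne_zero {u Q : K} (hQ : ‖Q - 1‖ < 1) {M : ℕ} (hM : 1 ≤ M)
    (hu : 1 ≤ ‖1 - u ^ M‖) : 1 - Q ^ M * u ^ M ≠ 0 := by
  have hQ1 : ‖Q‖ ≤ 1 := aux_norm_le_one hQ
  have hQM : ‖1 - Q ^ M‖ ≤ ‖Q - 1‖ := by
    rw [norm_sub_rev]; exact aux_geom_norm hQ1 M
  have hB : ‖u ^ M * (1 - Q ^ M)‖ < ‖1 - u ^ M‖ := by
    rw [norm_mul, norm_pow]
    rcases le_or_gt ‖u‖ 1 with h | h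
    · calc ‖u‖ ^ M * ‖1 - Q ^ M‖ ≤ 1 * ‖Q - 1‖ :=
            mul_le_mul (pow_le_one₀ (norm_nonneg _) h) hQM (norm_nonneg _) zero_le_one
        _ = ‖Q - 1‖ := one_mul _
        _ < 1 := hQ
        _ ≤ ‖1 - u ^ M‖ := hu
    · have huM : (1 : ℝ) < ‖u‖ ^ M := one_lt_pow₀ h (by omega)
      have hA : ‖1 - u ^ M‖ = ‖u‖ ^ M := by
        rw [show (1 : K) - u ^ M = -u ^ M + 1 by ring,
          aux_norm_add_eq (by simpa using huM), norm_neg, norm_pow]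
      rw [hA]
      calc ‖u‖ ^ M * ‖1 - Q ^ M‖ ≤ ‖u‖ ^ M * ‖Q - 1‖ :=
            mul_le_mul_of_nonneg_left hQM (by positivity)
        _ < ‖u‖ ^ M * 1 := by
            apply mul_lt_mul_of_pos_left hQ (by positivity)
        _ = ‖u‖ ^ M := mul_one _
  intro h
  have heq : 1 - u ^ M = -(u ^ M * (1 - Q ^ M)) := by linear_combination h
  rw [heq, norm_neg] at hB
  exact lt_irrefl _ hB

end Aux

/-- **total mass of `E^{(k)}`, Proposition 5.** For all `k ≥ 0`, `f ≥ 1`,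
`N ≥ 0`: `∑_{x=0}^{f p^N - 1} E^{(k)}_{u:a_1,q}(x ; f p^N) = (1-u)⁻¹ H_k^{(1)}(u,q|a_1)`,
where `H_k^{(1)}(u,q|a_1) = (1-u)(1-q)^{-k} ∑_{l=0}^k C(k,l)(-1)^l (1-q^{l a_1}u)⁻¹`. -/
theorem sum_Emeas_eq
    {p : ℕ} [Fact p.Prime] {K : Type*} [NormedField K] [CompleteSpace K]
    [IsUltrametricDist K] (hpK : ‖(p : K)‖ = (p : ℝ)⁻¹)
    (a1 : ℤ_[p]) (ha1 : a1 ≠ 0)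
    (u q : K) (hu : ∀ f : ℕ, 1 ≤ f → 1 ≤ ‖1 - u ^ f‖)
    (hq0 : 0 < ‖1 - q‖) (hq1 : ‖1 - q‖ < (p : ℝ) ^ (-(1 : ℝ) / ((p : ℝ) - 1)))
    (k f N : ℕ) (hf : 1 ≤ f) :
    ∑ x ∈ Finset.range (f * p ^ N), Emeas u q a1 k (f * p ^ N) x =
      (1 - u)⁻¹ *
        ((1 - u) * ((1 - q)⁻¹) ^ k *
          ∑ l ∈ Finset.range (k + 1),
            (k.choose l : K) * (-1) ^ l * (1 - qpow q ((l : ℤ_[p]) * a1) * u)⁻¹) := by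
  have hp2 : 2 ≤ p := (Fact.out : p.Prime).two_le
  have hpR : (1 : ℝ) < p := by exact_mod_cast Nat.lt_of_lt_of_le one_lt_two hp2
  have hpK1 : ‖(p : K)‖ < 1 := by
    rw [hpK]; exact inv_lt_one_of_one_lt₀ hpR
  have hq : ‖q - 1‖ < 1 := by
    rw [norm_sub_rev]
    refine hq1.trans_le (le_of_lt ?_)
    apply Real.rpow_lt_one_of_one_lt_of_neg hpR
    apply div_neg_of_neg_of_pos (by norm_num) (by linarith)
  set M := f * p ^ N with hM
  have hM1 : 1 ≤ M := Nat.one_le_iff_ne_zero.mpr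
    (Nat.mul_ne_zero (by omega) (Nat.pos_iff_ne_zero.mp (Nat.pow_pos (by omega) : 0 < p ^ N)))
  set Q : ℕ → K := fun l => qpow q ((l : ℤ_[p]) * a1) with hQ
  have hQnorm : ∀ l, ‖Q l - 1‖ < 1 := fun l =>
    lt_of_le_of_lt (aux_qpow_sub_one hq hpK1 _) hq
  have hpow : ∀ l x : ℕ, qpow q (((l * x : ℕ) : ℤ_[p]) * a1) = Q l ^ x := by
    intro l x
    rw [show (((l * x : ℕ) : ℤ_[p]) * a1) = (x : ℤ_[p]) * ((l : ℤ_[p]) * a1) by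
      push_cast; ring]
    exact aux_qpow_natCast_mul hq hpK1 x _
  have hne1 : ∀ l, 1 - Q l * u ≠ 0 := by
    intro l
    have := aux_ne_zero (u := u) (hQnorm l) le_rfl (by simpa using hu 1 le_rfl)
    simpa using this
  have hneM : ∀ l, 1 - Q l ^ M * u ^ M ≠ 0 := fun l =>
    aux_ne_zero (hQnorm l) hM1 (hu M hM1)
  have hu1 : (1 : K) - u ≠ 0 := by
    intro h
    have := hu 1 le_rfl
    rw [pow_one, h] at this
    simp at this
    linarith
  -- rewrite the RHS
  rw [← mul_assoc, ← mul_assoc, inv_mul_cancel₀ hu1, one_mul]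
  -- rewrite the LHS
  have hLHS : ∀ x : ℕ, Emeas u q a1 k M x =
      ∑ l ∈ Finset.range (k + 1),
        ((1 - q)⁻¹) ^ k * ((k.choose l : K) * (-1) ^ l) *
          ((1 - Q l ^ M * u ^ M)⁻¹ * (u * Q l) ^ x) := by
    intro x
    rw [Emeas, Finset.mul_sum]
    apply Finset.sum_congr rfl
    intro l _
    rw [hpow l x, hpow l M, mul_pow]
    ring
  rw [Finset.sum_congr rfl fun x _ => hLHS x, Finset.sum_comm]
  rw [Finset.mul_sum]
  apply Finset.sum_congr rfl
  intro l _
  rw [← Finset.mul_sum, ← Finset.mul_sum]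
  have hgeom : ∑ x ∈ Finset.range M, (u * Q l) ^ x =
      ((u * Q l) ^ M - 1) / (u * Q l - 1) := by
    apply geom_sum_eq
    intro h
    apply hne1 l
    rw [mul_comm] at h
    rw [h, sub_self]
  rw [hgeom]
  have hQM : (u * Q l) ^ M - 1 = -(1 - Q l ^ M * u ^ M) := by
    rw [mul_pow]; ring
  have huQ : u * Q l - 1 = -(1 - Q l * u) := by ring
  rw [hQM, huQ, neg_div_neg_eq, div_eq_mul_inv,
    ← mul_assoc (1 - Q l ^ M * u ^ M)⁻¹, inv_mul_cancel₀ (hneM l), one_mul]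
  ring
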